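/- Suppose f : ℝᴺ × ℝⁿ × ℝ → ℝᴺ is a uniform contraction in its first argument with constant θ ∈ (0,1) (in the Euclidean norm) and has image contained in a compact set K ⊆ ℝᴺ. Then for any bi-infinite sequences u : ℤ → ℝⁿ and e : ℤ → ℝ there exists a unique bounded bi-infinite sequence x* : ℤ → ℝᴺ satisfying x*_{k+1} = f(x*_k, u_k, e_k) for all k ∈ ℤ. -/

import Mathlib

/-- a uniform state contraction with compactly contained image admits, for any
bi-infinite inputs, a unique bounded bi-infinite solution x* of x_{k+1} = f(x_k, u_k, e_k). -/
theorem stmt2 {N n : ℕ} (θ : ℝ) (hθ : θ ∈ Set.Ioo (0:ℝ) 1)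
    (f : EuclideanSpace ℝ (Fin N) → EuclideanSpace ℝ (Fin n) → ℝ → EuclideanSpace ℝ (Fin N))
    (hcontr : ∀ (u : EuclideanSpace ℝ (Fin n)) (e : ℝ) (x₁ x₂ : EuclideanSpace ℝ (Fin N)),
      ‖f x₁ u e - f x₂ u e‖ ≤ θ * ‖x₁ - x₂‖)
    (K : Set (EuclideanSpace ℝ (Fin N))) (hK : IsCompact K)
    (hrange : ∀ x u e, f x u e ∈ K)
    (u : ℤ → EuclideanSpace ℝ (Fin n)) (e : ℤ → ℝ) :
    ∃! x : ℤ → EuclideanSpace ℝ (Fin N),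
      (∀ k : ℤ, x (k+1) = f (x k) (u k) (e k)) ∧ (∃ M : ℝ, ∀ k : ℤ, ‖x k‖ ≤ M) := by
  obtain ⟨hθ0, hθ1⟩ := hθ
  let E := EuclideanSpace ℝ (Fin N)
  -- bound on K
  obtain ⟨C, hC⟩ : ∃ C, ∀ y ∈ K, ‖y‖ ≤ C := hK.isBounded.exists_norm_le
  -- the map on bounded sequences
  have hTdef : ∀ x : BoundedContinuousFunction ℤ E, ∀ k : ℤ,
      ‖f (x (k-1)) (u (k-1)) (e (k-1))‖ ≤ C := fun x k => hC _ (hrange _ _ _)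
  let T : BoundedContinuousFunction ℤ E → BoundedContinuousFunction ℤ E := fun x =>
    BoundedContinuousFunction.ofNormedAddCommGroup
      (fun k : ℤ => f (x (k-1)) (u (k-1)) (e (k-1)))
      continuous_of_discreteTopology C (hTdef x)
  have hT : ∀ x : BoundedContinuousFunction ℤ E, ∀ k : ℤ,
      T x k = f (x (k-1)) (u (k-1)) (e (k-1)) := fun x k => rfl
  have hLip : LipschitzWith θ.toNNReal T := by
    intro x y
    rw [edist_dist, edist_dist, ← ENNReal.ofReal_coe_nnreal, ← ENNReal.ofReal_mul (by positivity)]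
    apply ENNReal.ofReal_le_ofReal
    rw [Real.coe_toNNReal _ hθ0.le]
    apply BoundedContinuousFunction.dist_le (by positivity) |>.2
    intro k
    rw [hT, hT, dist_eq_norm]
    calc ‖f (x (k-1)) (u (k-1)) (e (k-1)) - f (y (k-1)) (u (k-1)) (e (k-1))‖
        ≤ θ * ‖x (k-1) - y (k-1)‖ := hcontr _ _ _ _
      _ ≤ θ * dist x y := by
          rw [← dist_eq_norm]
          exact mul_le_mul_of_nonneg_left (BoundedContinuousFunction.dist_coe_le_dist _) hθ0.le
  have hcontra : ContractingWith θ.toNNReal T := by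
    refine ⟨?_, hLip⟩
    exact (Real.toNNReal_lt_one).2 hθ1
  let x₀ := hcontra.fixedPoint T
  have hfix : T x₀ = x₀ := hcontra.fixedPoint_isFixedPt
  refine ⟨fun k => x₀ k, ⟨?_, ⟨‖x₀‖, fun k => x₀.norm_coe_le_norm k⟩⟩, ?_⟩
  · intro k
    show x₀ (k+1) = _
    conv_lhs => rw [← hfix, hT]
    norm_num
  · rintro y ⟨hyrec, M, hyM⟩
    have hycont : Continuous y := continuous_of_discreteTopology
    let yb : BoundedContinuousFunction ℤ E :=
      BoundedContinuousFunction.ofNormedAddCommGroup y hycont M hyM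
    have hyfix : Function.IsFixedPt T yb := by
      apply BoundedContinuousFunction.ext
      intro k
      rw [hT]
      have : y (k - 1 + 1) = f (y (k-1)) (u (k-1)) (e (k-1)) := hyrec (k-1)
      simpa [yb] using this.symm
    have : yb = x₀ := hcontra.fixedPoint_unique hyfix
    funext k
    have := congrFun (congrArg (fun g : BoundedContinuousFunction ℤ E => (g : ℤ → E)) this) k
    simpa [yb] using this
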